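/- Fix r > 0 and let p be a log-Hölder continuous function on B_n. Then there exist constants c, C > 0 (depending on r, n, and the log-Hölder constant of p) such that c·(1−|a|²)^{p(w)} ≤ (1−|a|²)^{p(z)} ≤ C·(1−|a|²)^{p(w)} for all a ∈ B_n and all z, w in the Bergman metric ball B(a,r). -/

import Mathlib

open MeasureTheory Metric Set Filter Finset
open scoped ENNReal Topology

noncomputable section

/-- `En n` is `ℂⁿ` with the Euclidean norm. -/
abbrev En (n : ℕ) := EuclideanSpace ℂ (Fin n)

instance (n : ℕ) : MeasurableSpace (En n) := borel _
instance (n : ℕ) : BorelSpace (En n) := ⟨rfl⟩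

/-- The open unit ball `𝔹ₙ ⊂ ℂⁿ`. -/
def Cball (n : ℕ) : Set (En n) := Metric.ball 0 1

/-- The paper's pairing `⟨z,w⟩ = ∑ zᵢ conj wᵢ` (Mathlib's `inner w z`). -/
def pin {n : ℕ} (z w : En n) : ℂ := @inner ℂ _ _ w z

open scoped Classical in
/-- Orthogonal projection of `w` onto the complex line spanned by `z` (zero if `z = 0`). -/
def Pzproj {n : ℕ} (z w : En n) : En n :=
  if z = 0 then 0 else ((pin w z) / (pin z z)) • z

/-- The involutive automorphism `σ_z` of the ball exchanging `0` and `z`. -/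
def sigmaInv {n : ℕ} (z w : En n) : En n :=
  ((1 : ℂ) / (1 - pin w z)) •
    ((z - Pzproj z w) + ((Real.sqrt (1 - ‖z‖ ^ 2) : ℝ) : ℂ) • (Pzproj z w - w))

/-- The pseudo-hyperbolic distance `d(z,w) = |σ_z(w)|`. -/
def phd {n : ℕ} (z w : En n) : ℝ := ‖sigmaInv z w‖

/-- The Bergman metric `β(z,w)`. -/
def bmet {n : ℕ} (z w : En n) : ℝ :=
  (1 / 2) * Real.log ((1 + phd z w) / (1 - phd z w))

/-- The Bergman metric ball `B(a,r)`. -/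
def Bball {n : ℕ} (a : En n) (r : ℝ) : Set (En n) :=
  {w | w ∈ Cball n ∧ bmet a w < r}

/-- The pseudo-hyperbolic ball `E(z,s)`. -/
def Eball {n : ℕ} (z : En n) (s : ℝ) : Set (En n) :=
  {w | w ∈ Cball n ∧ phd z w < s}

/-- The normalized Lebesgue measure `V` on `ℂⁿ`, with `V(𝔹ₙ) = 1`. -/
def Vm (n : ℕ) : Measure (En n) :=
  ((Measure.addHaar : Measure (En n)) (Cball n))⁻¹ • (Measure.addHaar : Measure (En n))

/-- The modular `ρ_{p(·),μ}(f) = ∫_{𝔹ₙ} |f|^{p(z)} dμ(z)` (as an extended real). -/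
def modular {n : ℕ} (p : En n → ℝ) (μ : Measure (En n)) (f : En n → ℂ) : ℝ≥0∞ :=
  ∫⁻ z in Cball n, (‖f z‖₊ : ℝ≥0∞) ^ (p z) ∂μ

/-- The Luxemburg–Nakano norm `‖f‖_{p(·),μ}` (as an extended real). -/
def luxNorm {n : ℕ} (p : En n → ℝ) (μ : Measure (En n)) (f : En n → ℂ) : ℝ≥0∞ :=
  sInf {γ : ℝ≥0∞ | γ ≠ 0 ∧ ∫⁻ z in Cball n, ((‖f z‖₊ : ℝ≥0∞) / γ) ^ (p z) ∂μ ≤ 1}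

/-- `p` is log-Hölder continuous on the ball. -/
def LogHolder {n : ℕ} (p : En n → ℝ) : Prop :=
  ∃ C > (0 : ℝ), ∀ z ∈ Cball n, ∀ w ∈ Cball n, dist z w < 1 / 2 →
    |p z - p w| ≤ C / Real.log (1 / dist z w)

/-- `p ∈ 𝒫^{log}(𝔹ₙ)`: log-Hölder continuous with `1 < p⁻ ≤ p⁺ < ∞`. -/
def Plog {n : ℕ} (p : En n → ℝ) : Prop :=
  LogHolder p ∧ (∃ m : ℝ, 1 < m ∧ ∀ z ∈ Cball n, m ≤ p z) ∧
    (∃ M : ℝ, ∀ z ∈ Cball n, p z ≤ M)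

/-- Membership in the variable exponent Bergman space `A^{p(·)}(𝔹ₙ)`. -/
def memA {n : ℕ} (p : En n → ℝ) (f : En n → ℂ) : Prop :=
  DifferentiableOn ℂ f (Cball n) ∧ modular p (Vm n) f < ⊤

/-- The Toeplitz operator `T_μ^β`. -/
def Toep {n : ℕ} (μ : Measure (En n)) (β : ℝ) (f : En n → ℂ) : En n → ℂ :=
  fun z => ∫ w in Cball n, f w / (1 - pin z w) ^ (((n : ℝ) + 1 + β : ℂ)) ∂μ

/-- The weighted composition operator `C_{u,φ}`. -/
def wco {n : ℕ} (u : En n → ℂ) (φ : En n → En n) (f : En n → ℂ) : En n → ℂ :=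
  fun z => u z * f (φ z)

/-- The weight `ω_φ(z) = (1-|φ(z)|²)^{-(n+1)(p(z)-p(φ(z)))/p(φ(z))}`. -/
def omegaW {n : ℕ} (p : En n → ℝ) (φ : En n → En n) (z : En n) : ℝ :=
  (1 - ‖φ z‖ ^ 2) ^ (-(((n : ℝ) + 1) * (p z - p (φ z)) / p (φ z)))

/-- A bounded linear operator on `A^{p(·)}(𝔹ₙ)`. -/
def BoundedOnA {n : ℕ} (p : En n → ℝ) (T : (En n → ℂ) → (En n → ℂ)) : Prop :=
  ∃ C > (0 : ℝ), ∀ f : En n → ℂ, memA p f →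
    luxNorm p (Vm n) (T f) ≤ ENNReal.ofReal C * luxNorm p (Vm n) f

/-- Compactness of an operator on `A^{p(·)}(𝔹ₙ)`, via the sequential criterion:
`‖T f_j‖_{p(·)} → 0` for every norm-bounded sequence in `A^{p(·)}` converging to `0`
uniformly on compact subsets of the ball. -/
def CompactOnA {n : ℕ} (p : En n → ℝ) (T : (En n → ℂ) → (En n → ℂ)) : Prop :=
  ∀ f : ℕ → En n → ℂ, (∀ j, memA p (f j)) →
    (∃ Cb : ℝ, ∀ j, luxNorm p (Vm n) (f j) ≤ ENNReal.ofReal Cb) →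
    (∀ K ⊆ Cball n, IsCompact K → TendstoUniformlyOn f 0 atTop K) →
    Tendsto (fun j => luxNorm p (Vm n) (T (f j))) atTop (𝓝 0)



section AuxStmt3

open ComplexConjugate

variable {n : ℕ}

local notation "⟪" x ", " y "⟫" => @inner ℂ (En n) _ x y

lemma mem_Cball {x : En n} (h : x ∈ Cball n) : ‖x‖ < 1 := by
  simpa [Cball, Metric.mem_ball, dist_zero_right] using h

lemma osc_step (p : En n → ℝ) (C : ℝ) (hC : 0 < C)
    (hlog : ∀ z ∈ Cball n, ∀ w ∈ Cball n, dist z w < 1 / 2 →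
      |p z - p w| ≤ C / Real.log (1 / dist z w)) :
    ∀ x ∈ Cball n, ∀ y ∈ Cball n, dist x y ≤ 1 / 4 → |p x - p y| ≤ C / Real.log 4 := by
  intro x hx y hy hd
  have hl4 : (0:ℝ) < Real.log 4 := Real.log_pos (by norm_num)
  rcases eq_or_lt_of_le (dist_nonneg : 0 ≤ dist x y) with h0 | h0
  · have hxy : x = y := by rw [← dist_eq_zero]; exact h0.symm
    rw [hxy]
    simp
    positivity
  · have h1 := hlog x hx y hy (by linarith)
    have h2 : (4:ℝ) ≤ 1 / dist x y := by
      rw [le_one_div (by norm_num) h0]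
      exact hd
    have h3 : Real.log 4 ≤ Real.log (1 / dist x y) :=
      Real.log_le_log (by norm_num) h2
    calc |p x - p y| ≤ C / Real.log (1 / dist x y) := h1
      _ ≤ C / Real.log 4 := div_le_div_of_nonneg_left hC.le hl4 h3

lemma osc (p : En n → ℝ) (C : ℝ) (hC : 0 < C)
    (hlog : ∀ z ∈ Cball n, ∀ w ∈ Cball n, dist z w < 1 / 2 →
      |p z - p w| ≤ C / Real.log (1 / dist z w)) :
    ∀ z ∈ Cball n, ∀ w ∈ Cball n, |p z - p w| ≤ 8 * (C / Real.log 4) := by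
  intro z hz w hw
  have step := osc_step p C hC hlog
  set x : ℕ → En n := fun i => z + ((i : ℝ) / 8) • (w - z) with hxdef
  have hmem : ∀ i : ℕ, i ≤ 8 → x i ∈ Cball n := by
    intro i hi
    have hc0 : (0:ℝ) ≤ (i : ℝ) / 8 := by positivity
    have hc1 : (i : ℝ) / 8 ≤ 1 := by
      rw [div_le_one (by norm_num)]
      exact_mod_cast hi
    have hnz := mem_Cball hz
    have hnw := mem_Cball hw
    have hrw : x i = (1 - (i : ℝ) / 8) • z + ((i : ℝ) / 8) • w := by
      rw [hxdef]; module
    have : x i ∈ Metric.ball (0 : En n) 1 := by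
      rw [hrw]
      exact (convex_ball (0 : En n) 1) hz hw (by linarith) hc0 (by ring)
    exact this
  have hdist : ∀ i : ℕ, dist (x i) (x (i + 1)) ≤ 1 / 4 := by
    intro i
    have h1 : x i - x (i + 1) = (-(1 / 8 : ℝ)) • (w - z) := by
      rw [hxdef]
      simp only
      push_cast
      module
    have h2 : ‖w - z‖ < 2 := by
      calc ‖w - z‖ ≤ ‖w‖ + ‖z‖ := norm_sub_le _ _
        _ < 2 := by linarith [mem_Cball hz, mem_Cball hw]
    rw [dist_eq_norm, h1, norm_smul, Real.norm_eq_abs]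
    rw [abs_of_nonpos (by norm_num)]
    linarith
  have key : ∀ i : ℕ, i ≤ 8 → |p z - p (x i)| ≤ i * (C / Real.log 4) := by
    intro i
    induction i with
    | zero =>
      intro _
      have : x 0 = z := by rw [hxdef]; simp
      simp [this]
    | succ k ih =>
      intro hk
      have hk8 : k ≤ 8 := by omega
      have h1 := ih hk8
      have h2 := step (x k) (hmem k hk8) (x (k + 1)) (hmem (k + 1) hk) (hdist k)
      calc |p z - p (x (k + 1))| ≤ |p z - p (x k)| + |p (x k) - p (x (k + 1))| := abs_sub_le _ _ _
        _ ≤ k * (C / Real.log 4) + C / Real.log 4 := add_le_add h1 h2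
        _ = (k + 1 : ℕ) * (C / Real.log 4) := by push_cast; ring
  have h8 : x 8 = w := by
    show z + (((8:ℕ) : ℝ) / 8) • (w - z) = w
    push_cast
    module
  have := key 8 le_rfl
  rw [h8] at this
  simpa using this

set_option maxHeartbeats 1000000 in
lemma ratio (p : En n → ℝ) (C B K : ℝ) (hC : 0 < C) (hK : 1 ≤ K)
    (hB : ∀ z ∈ Cball n, ∀ w ∈ Cball n, |p z - p w| ≤ B)
    (hlog : ∀ z ∈ Cball n, ∀ w ∈ Cball n, dist z w < 1 / 2 →
      |p z - p w| ≤ C / Real.log (1 / dist z w)) :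
    ∀ a ∈ Cball n, ∀ x ∈ Cball n, ‖x - a‖ ≤ K * Real.sqrt (1 - ‖a‖ ^ 2) →
      |p x - p a| * |Real.log (1 - ‖a‖ ^ 2)| ≤
        2 * B * Real.log (8 * K) + 2 * C * (1 + Real.log K) := by
  intro a ha x hx hxa
  have hB0 : 0 ≤ B := le_trans (abs_nonneg _) (hB a ha a ha)
  have hK0 : (0:ℝ) < K := by linarith
  have hlogK : 0 ≤ Real.log K := Real.log_nonneg hK
  have hl8 : (0:ℝ) < Real.log 8 := Real.log_pos (by norm_num)
  have hl8K : 0 < Real.log (8 * K) := Real.log_pos (by nlinarith)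
  have hna : ‖a‖ < 1 := mem_Cball ha
  have ht0 : (0:ℝ) < 1 - ‖a‖ ^ 2 := by nlinarith [norm_nonneg a]
  set t : ℝ := 1 - ‖a‖ ^ 2 with htdef
  have ht1 : t ≤ 1 := by nlinarith [norm_nonneg a]
  set u : ℝ := Real.sqrt t with hudef
  have hu0 : 0 < u := Real.sqrt_pos.mpr ht0
  have hu2 : u ^ 2 = t := Real.sq_sqrt ht0.le
  have hu1 : u ≤ 1 := by
    have h := Real.sqrt_le_sqrt ht1
    rw [Real.sqrt_one] at h
    exact h
  have hlogu : Real.log u ≤ 0 := Real.log_nonpos hu0.le hu1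
  set L : ℝ := -Real.log u with hLdef
  have hL0 : 0 ≤ L := by rw [hLdef]; linarith
  have habs : |Real.log t| = 2 * L := by
    rw [← hu2, Real.log_pow]
    rw [abs_of_nonpos (by push_cast; linarith)]
    push_cast
    rw [hLdef]; ring
  rw [habs]
  by_cases hcase : 1 / (8 * K) ≤ u
  · -- large u case
    have hLup : L ≤ Real.log (8 * K) := by
      have h1 : Real.log (1 / (8 * K)) ≤ Real.log u := Real.log_le_log (by positivity) hcase
      rw [Real.log_div one_ne_zero (by positivity), Real.log_one] at h1
      rw [hLdef]; linarith
    have h2 : |p x - p a| ≤ B := hB x hx a ha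
    have := mul_le_mul h2 (by linarith : 2 * L ≤ 2 * Real.log (8 * K)) (by linarith) hB0
    have hpos : 0 ≤ 2 * C * (1 + Real.log K) := by positivity
    nlinarith
  · -- small u case
    push_neg at hcase
    rcases eq_or_ne x a with rfl | hxa0
    · simp
      positivity
    · have hd0 : 0 < dist x a := dist_pos.mpr hxa0
      have hdn : dist x a = ‖x - a‖ := dist_eq_norm x a
      have hdKu : dist x a ≤ K * u := by rw [hdn]; exact hxa
      have hKu0 : 0 < K * u := by positivity
      have hKu8 : K * u < 1 / 8 := by
        have := mul_lt_mul_of_pos_left hcase hK0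
        rw [mul_one_div] at this
        calc K * u < K / (8 * K) := this
          _ = 1 / 8 := by field_simp
      have hd12 : dist x a < 1 / 2 := by linarith
      have h1 := hlog x hx a ha hd12
      set G : ℝ := Real.log (1 / dist x a) with hGdef
      have hG8 : Real.log 8 ≤ G := by
        rw [hGdef]
        have h2 : (8:ℝ) ≤ 1 / dist x a := by
          rw [le_one_div (by norm_num) hd0]
          linarith
        exact Real.log_le_log (by norm_num) h2
      have hG0 : 0 < G := lt_of_lt_of_le hl8 hG8
      have hLG : L ≤ G + Real.log K := by
        have h3 : Real.log (1 / (K * u)) ≤ G := by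
          rw [hGdef]
          apply Real.log_le_log (by positivity)
          exact one_div_le_one_div_of_le hd0 hdKu
        rw [Real.log_div one_ne_zero (by positivity), Real.log_one, Real.log_mul hK0.ne' hu0.ne'] at h3
        rw [hLdef]; linarith
      have hG1 : (1:ℝ) < G := by
        have he : Real.exp 1 < 8 := by
          have := Real.exp_one_lt_d9
          linarith
        have h8 : (1:ℝ) < Real.log 8 := by
          rw [Real.lt_log_iff_exp_lt (by norm_num : (0:ℝ) < 8)]
          exact he
        linarith
      have hLG' : L ≤ (1 + Real.log K) * G := by
        have : Real.log K ≤ Real.log K * G := le_mul_of_one_le_right hlogK hG1.le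
        nlinarith
      have h4 : |p x - p a| ≤ C / G := h1
      have h5 : |p x - p a| * (2 * L) ≤ (C / G) * (2 * L) :=
        mul_le_mul_of_nonneg_right h4 (by linarith)
      have h6 : (C / G) * (2 * L) ≤ 2 * C * (1 + Real.log K) := by
        rw [div_mul_eq_mul_div, div_le_iff₀ hG0]
        nlinarith [mul_le_mul_of_nonneg_left hLG' (by linarith : (0:ℝ) ≤ 2 * C)]
      have hpos : 0 ≤ 2 * B * Real.log (8 * K) := by positivity
      calc |p x - p a| * (2 * L) ≤ C / G * (2 * L) := h5
        _ ≤ 2 * C * (1 + Real.log K) := h6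
        _ ≤ 2 * B * Real.log (8 * K) + 2 * C * (1 + Real.log K) := by linarith

lemma le_of_sq_le_sq' (x y : ℝ) (hx : 0 ≤ x) (hy : 0 ≤ y) (h : x ^ 2 ≤ y ^ 2) : x ≤ y := by
  nlinarith

set_option maxHeartbeats 1000000 in
lemma geo_real (A Z D u nN naQ nzQ nza s : ℝ)
    (hA1 : A < 1) (hZ1 : Z < 1)
    (hu0 : 0 < u) (hu2 : u ^ 2 = 1 - A) (hu1 : u ≤ 1)
    (hD0 : 0 < D) (hDlow : (1 - Z) / 2 ≤ D)
    (hNsq : nN ^ 2 = naQ ^ 2 + (1 - A) * nzQ ^ 2)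
    (hiden : D ^ 2 - nN ^ 2 = (1 - A) * (1 - Z))
    (hN0 : 0 ≤ nN) (haQ0 : 0 ≤ naQ) (hzQ0 : 0 ≤ nzQ)
    (htri : nza ≤ nzQ + naQ)
    (hs0 : 0 < s) (hs1 : s < 1) (hds : nN ≤ s * D) :
    nza ≤ 4 * s / (1 - s ^ 2) * u := by
  have hss : (0:ℝ) < 1 - s ^ 2 := by nlinarith
  have h1A : (0:ℝ) < 1 - A := by nlinarith
  have hZ0 : (0:ℝ) < 1 - Z := by nlinarith
  have hsD : 0 ≤ s * D := by positivity
  have hNsq' : nN ^ 2 ≤ (s * D) ^ 2 := by nlinarith [mul_le_mul hds hds hN0 hsD]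
  have hkey : D ^ 2 * (1 - s ^ 2) ≤ (1 - A) * (1 - Z) := by nlinarith
  have h2 : ((1 - Z) / 2) ^ 2 ≤ D ^ 2 := by nlinarith
  have h3 : (1 - Z) ^ 2 * (1 - s ^ 2) / 4 ≤ (1 - A) * (1 - Z) := by
    nlinarith [mul_le_mul_of_nonneg_right h2 hss.le]
  have hZA : (1 - Z) * (1 - s ^ 2) ≤ 4 * (1 - A) := by nlinarith [h3, mul_pos hZ0 hss]
  have hDup : D * (1 - s ^ 2) ≤ 2 * (1 - A) := by
    apply le_of_sq_le_sq' _ _ (by positivity) (by positivity)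
    have : (D * (1 - s ^ 2)) ^ 2 = D ^ 2 * (1 - s ^ 2) * (1 - s ^ 2) := by ring
    nlinarith [mul_le_mul_of_nonneg_right hkey hss.le, mul_le_mul_of_nonneg_left hZA h1A.le]
  have hcomp1 : naQ ≤ s * D := by
    apply le_of_sq_le_sq' _ _ haQ0 hsD
    nlinarith [sq_nonneg nzQ]
  have hcomp2 : u * nzQ ≤ s * D := by
    apply le_of_sq_le_sq' _ _ (by positivity) hsD
    have : (u * nzQ) ^ 2 = (1 - A) * nzQ ^ 2 := by rw [mul_pow, hu2]
    nlinarith [sq_nonneg naQ]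
  have hfin : nza * (1 - s ^ 2) * u ≤ 4 * s * u * u := by
    have e1 : nza * u ≤ 2 * (s * D) := by
      have t1 : nza * u ≤ nzQ * u + naQ * u := by
        nlinarith [mul_le_mul_of_nonneg_right htri hu0.le]
      have t2 : naQ * u ≤ s * D := by
        nlinarith [mul_le_mul_of_nonneg_right hcomp1 hu0.le,
          mul_le_mul_of_nonneg_left hu1 hsD]
      have t3 : nzQ * u ≤ s * D := by linarith [hcomp2, mul_comm u nzQ]
      linarith
    calc nza * (1 - s ^ 2) * u = nza * u * (1 - s ^ 2) := by ring
      _ ≤ 2 * (s * D) * (1 - s ^ 2) := mul_le_mul_of_nonneg_right e1 hss.le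
      _ = 2 * s * (D * (1 - s ^ 2)) := by ring
      _ ≤ 2 * s * (2 * (1 - A)) := mul_le_mul_of_nonneg_left hDup (by positivity)
      _ = 4 * s * u * u := by rw [← hu2]; ring
  rw [div_mul_eq_mul_div, le_div_iff₀ hss]
  exact le_of_mul_le_mul_right (by nlinarith) hu0

set_option maxHeartbeats 1600000 in
lemma geo (a z : En n) (ha : ‖a‖ < 1) (hz : ‖z‖ < 1) :
    phd a z < 1 ∧ ∀ s : ℝ, 0 < s → s < 1 → phd a z ≤ s →
      ‖z - a‖ ≤ (4 * s / (1 - s ^ 2)) * Real.sqrt (1 - ‖a‖ ^ 2) := by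
  by_cases ha0 : a = 0
  · subst ha0
    have h1 : phd 0 z = ‖z‖ := by
      simp [phd, sigmaInv, pin, Pzproj, norm_smul]
    constructor
    · simpa [h1]
    · intro s hs0 hs1 hds
      have hss : 0 < 1 - s ^ 2 := by nlinarith
      have h2 : (1:ℝ) ≤ 4 / (1 - s ^ 2) := by
        rw [le_div_iff₀ hss]; nlinarith
      have h3 : ‖z - 0‖ = ‖z‖ := by simp
      rw [h3]
      simp only [norm_zero]
      rw [show (1:ℝ) - 0 ^ 2 = 1 by ring, Real.sqrt_one, mul_one]
      calc ‖z‖ ≤ s := by simpa [h1] using hds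
        _ ≤ 4 * s / (1 - s ^ 2) := by
            rw [mul_comm, mul_div_assoc]
            nlinarith [mul_le_mul_of_nonneg_left h2 hs0.le]
  · -- main case
    have hA0 : (0:ℝ) < ‖a‖ ^ 2 := by
      have h : (0:ℝ) < ‖a‖ := norm_pos_iff.mpr ha0
      positivity
    set A : ℝ := ‖a‖ ^ 2 with hAdef
    have hA1 : A < 1 := by nlinarith [norm_nonneg a]
    set α : ℂ := ⟪a, z⟫ with hαdef
    have hAne : (A : ℂ) ≠ 0 := by exact_mod_cast hA0.ne'
    have haa : ⟪a, a⟫ = (A : ℂ) := by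
      rw [inner_self_eq_norm_sq_to_K]; norm_cast
    set Q : En n := ((α / (A : ℂ)) • a : En n) with hQdef
    have hP : Pzproj a z = Q := by
      rw [Pzproj, if_neg ha0, pin, pin, inner_self_eq_norm_sq_to_K, hQdef, ← hαdef]
      norm_cast
    set m : ℝ := ‖α‖ ^ 2 with hmdef
    have hm0 : 0 ≤ m := by positivity
    have hmsq : m = Complex.normSq α := by
      rw [hmdef, ← Complex.sq_norm]
    have hαconj : α * conj α = (m : ℂ) := by rw [Complex.mul_conj, hmsq]
    have hconjα : conj α * α = (m : ℂ) := by rw [mul_comm]; exact hαconj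
    set R : ℝ := α.re with hRdef
    set Z : ℝ := ‖z‖ ^ 2 with hZdef
    have hzz : ⟪z, z⟫ = (Z : ℂ) := by
      rw [inner_self_eq_norm_sq_to_K]; norm_cast
    have haQ : ⟪a, Q⟫ = α := by
      rw [hQdef, inner_smul_right, haa]; field_simp
    have hQa : ⟪Q, a⟫ = conj α := by
      rw [hQdef, inner_smul_left, haa, map_div₀, Complex.conj_ofReal]
      field_simp
    have hza : ⟪z, a⟫ = conj α := by
      rw [hαdef, ← inner_conj_symm]
    have hzQ : ⟪z, Q⟫ = ((m / A : ℝ) : ℂ) := by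
      rw [hQdef, inner_smul_right, hza]
      push_cast
      field_simp
      linear_combination hαconj
    have hQz : ⟪Q, z⟫ = ((m / A : ℝ) : ℂ) := by
      rw [hQdef, inner_smul_left, ← hαdef, map_div₀, Complex.conj_ofReal]
      push_cast
      field_simp
      linear_combination hconjα
    have hQQ : ⟪Q, Q⟫ = ((m / A : ℝ) : ℂ) := by
      rw [hQdef, inner_smul_right, inner_smul_left, haa, map_div₀, Complex.conj_ofReal]
      push_cast
      field_simp
      linear_combination hαconj
    have haQsq : ‖a - Q‖ ^ 2 = A - 2 * R + m / A := by
      rw [InnerProductSpace.norm_sq_eq_re_inner (𝕜 := ℂ), inner_sub_sub_self, haa, haQ, hQa, hQQ]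
      simp [Complex.add_re, Complex.sub_re, Complex.ofReal_re, Complex.conj_re, ← hRdef]
      ring
    have hzQsq : ‖z - Q‖ ^ 2 = Z - m / A := by
      rw [InnerProductSpace.norm_sq_eq_re_inner (𝕜 := ℂ), inner_sub_sub_self, hzz, hzQ, hQz, hQQ]
      simp [Complex.add_re, Complex.sub_re, Complex.ofReal_re]
    -- the numerator N
    have h1A : (0:ℝ) ≤ 1 - A := by linarith
    set c : ℝ := Real.sqrt (1 - A) with hcdef
    have hc0 : 0 < c := Real.sqrt_pos.mpr (by nlinarith)
    have hc2 : c ^ 2 = 1 - A := Real.sq_sqrt h1A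
    have hc1 : c ≤ 1 := by
      have h := Real.sqrt_le_sqrt (show 1 - A ≤ 1 by linarith)
      rw [Real.sqrt_one] at h
      rw [hcdef]; exact h
    set N : En n := (a - Q) + ((c : ℝ) : ℂ) • (Q - z) with hNdef
    have horthaz : ⟪a - Q, z - Q⟫ = 0 := by
      rw [inner_sub_left, inner_sub_right, inner_sub_right, haQ, hQz, hQQ, ← hαdef]
      ring
    have hNsq : ‖N‖ ^ 2 = ‖a - Q‖ ^ 2 + (1 - A) * ‖z - Q‖ ^ 2 := by
      rw [hNdef, norm_add_sq (𝕜 := ℂ)]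
      have h5 : ⟪a - Q, ((c : ℝ) : ℂ) • (Q - z)⟫ = 0 := by
        rw [inner_smul_right, show Q - z = -(z - Q) by abel, inner_neg_right, horthaz]
        ring
      rw [h5]
      have h6 : ‖((c : ℝ) : ℂ) • (Q - z)‖ ^ 2 = (1 - A) * ‖z - Q‖ ^ 2 := by
        rw [norm_smul, Complex.norm_real, Real.norm_eq_abs, abs_of_pos hc0, norm_sub_rev, mul_pow, hc2]
      rw [h6]
      simp
    -- distances
    have hCS : ‖α‖ < 1 := by
      calc ‖α‖ ≤ ‖a‖ * ‖z‖ := norm_inner_le_norm a z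
        _ < 1 := by nlinarith [norm_nonneg a, norm_nonneg z]
    set D : ℝ := ‖(1 : ℂ) - α‖ with hDdef
    have hD0 : 0 < D := by
      have h7 : ‖(1:ℂ)‖ - ‖α‖ ≤ ‖(1:ℂ) - α‖ := norm_sub_norm_le _ _
      rw [norm_one] at h7
      rw [hDdef]; linarith
    have hDsq : D ^ 2 = 1 - 2 * R + m := by
      have h8 : D ^ 2 = Complex.normSq ((1:ℂ) - α) := by
        rw [hDdef, Complex.sq_norm]
      rw [h8, hmsq, hRdef]
      simp [Complex.normSq_apply, Complex.sub_re, Complex.sub_im]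
      ring
    have hphd : phd a z = ‖N‖ / D := by
      rw [phd, sigmaInv, hP, pin, ← hαdef, ← hNdef, norm_smul, norm_div, norm_one, ← hDdef]
      ring
    have hiden : D ^ 2 - ‖N‖ ^ 2 = (1 - A) * (1 - Z) := by
      rw [hDsq, hNsq, haQsq, hzQsq]
      field_simp
      ring
    have hZ1 : 0 < 1 - Z := by nlinarith [norm_nonneg z]
    have hNlt : ‖N‖ < D := by
      nlinarith [norm_nonneg N, hD0]
    have hDlow : (1 - Z) / 2 ≤ D := by
      have h7 : ‖(1:ℂ)‖ - ‖α‖ ≤ ‖(1:ℂ) - α‖ := norm_sub_norm_le _ _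
      rw [norm_one] at h7
      have h9 : ‖α‖ ≤ ‖a‖ * ‖z‖ := norm_inner_le_norm a z
      have h10 : 1 - ‖a‖ * ‖z‖ ≤ D := by rw [hDdef]; linarith
      nlinarith [norm_nonneg a, norm_nonneg z]
    have hZ0 : Z < 1 := by nlinarith [norm_nonneg z]
    have htri : ‖z - a‖ ≤ ‖z - Q‖ + ‖a - Q‖ := by
      calc ‖z - a‖ = ‖(z - Q) + (Q - a)‖ := by rw [show (z - Q) + (Q - a) = z - a by abel]
        _ ≤ ‖z - Q‖ + ‖Q - a‖ := norm_add_le _ _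
        _ = ‖z - Q‖ + ‖a - Q‖ := by rw [norm_sub_rev Q a]
    constructor
    · rw [hphd, div_lt_one hD0]; exact hNlt
    · intro s hs0 hs1 hds
      rw [hphd, div_le_iff₀ hD0] at hds
      exact geo_real A Z D c ‖N‖ ‖a - Q‖ ‖z - Q‖ ‖z - a‖ s hA1 hZ0 hc0 hc2 hc1 hD0 hDlow
        (by rw [hNsq]) hiden (norm_nonneg N) (norm_nonneg _) (norm_nonneg _) htri hs0 hs1 hds

end AuxStmt3

/-- comparability of `(1−|a|²)^{p(z)}` for `z` in a Bergman ball `B(a,r)`,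
for log-Hölder `p`. -/
theorem stmt_3 {n : ℕ} (r : ℝ) (hr : 0 < r) (p : En n → ℝ) (hp : LogHolder p) :
    ∃ c C : ℝ, 0 < c ∧ 0 < C ∧ ∀ a ∈ Cball n, ∀ z ∈ Bball a r, ∀ w ∈ Bball a r,
      c * (1 - ‖a‖ ^ 2) ^ (p w) ≤ (1 - ‖a‖ ^ 2) ^ (p z) ∧
      (1 - ‖a‖ ^ 2) ^ (p z) ≤ C * (1 - ‖a‖ ^ 2) ^ (p w) := by
  obtain ⟨Cl, hCl, hlog'⟩ := hp
  have hlog : ∀ z ∈ Cball n, ∀ w ∈ Cball n, dist z w < 1 / 2 →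
      |p z - p w| ≤ Cl / Real.log (1 / dist z w) := hlog'
  have hl4 : (0:ℝ) < Real.log 4 := Real.log_pos (by norm_num)
  set E : ℝ := Real.exp (2 * r) with hEdef
  have hE1 : 1 < E := by
    rw [hEdef, show (1:ℝ) = Real.exp 0 by rw [Real.exp_zero]]
    exact Real.exp_lt_exp.mpr (by linarith)
  set s : ℝ := (E - 1) / (E + 1) with hsdef
  have hs0 : 0 < s := div_pos (by linarith) (by linarith)
  have hs1 : s < 1 := by rw [hsdef, div_lt_one (by linarith)]; linarith
  have hss : (0:ℝ) < 1 - s ^ 2 := by nlinarith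
  set K : ℝ := max 1 (4 * s / (1 - s ^ 2)) with hKdef
  have hK1 : 1 ≤ K := le_max_left _ _
  have hK0 : (0:ℝ) < K := by linarith
  set B : ℝ := 8 * (Cl / Real.log 4) with hBdef
  have hB0 : 0 ≤ B := by
    rw [hBdef]
    have := div_nonneg hCl.le hl4.le
    linarith
  have hoscB : ∀ z ∈ Cball n, ∀ w ∈ Cball n, |p z - p w| ≤ B := osc p Cl hCl hlog
  set M : ℝ := 2 * B * Real.log (8 * K) + 2 * Cl * (1 + Real.log K) with hMdef
  have hlogK : 0 ≤ Real.log K := Real.log_nonneg hK1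
  have hlog8K : 0 ≤ Real.log (8 * K) := Real.log_nonneg (by nlinarith)
  have hM0 : 0 ≤ M := by
    rw [hMdef]
    have h1 : 0 ≤ 2 * B * Real.log (8 * K) := by positivity
    have h2 : 0 ≤ 2 * Cl * (1 + Real.log K) := by positivity
    linarith
  refine ⟨Real.exp (-(2 * M)), Real.exp (2 * M), Real.exp_pos _, Real.exp_pos _, ?_⟩
  intro a ha z hz w hw
  obtain ⟨hz1, hz2⟩ := hz
  obtain ⟨hw1, hw2⟩ := hw
  have hna : ‖a‖ < 1 := mem_Cball ha
  have ht0 : (0:ℝ) < 1 - ‖a‖ ^ 2 := by nlinarith [norm_nonneg a]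
  -- from Bergman ball membership to pseudo-hyperbolic bound and Euclidean bound
  have hball : ∀ x : En n, x ∈ Cball n → bmet a x < r →
      ‖x - a‖ ≤ K * Real.sqrt (1 - ‖a‖ ^ 2) := by
    intro x hx1 hx2
    have hnx : ‖x‖ < 1 := mem_Cball hx1
    obtain ⟨hd1, hgeo⟩ := geo a x hna hnx
    have hd0 : (0:ℝ) ≤ phd a x := norm_nonneg _
    have hbm : (1 / 2 : ℝ) * Real.log ((1 + phd a x) / (1 - phd a x)) < r := hx2
    have hfr0 : (0:ℝ) < (1 + phd a x) / (1 - phd a x) :=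
      div_pos (by linarith) (by linarith)
    have hfr : (1 + phd a x) / (1 - phd a x) < E := by
      have h := Real.exp_lt_exp.mpr
        (show Real.log ((1 + phd a x) / (1 - phd a x)) < 2 * r by linarith)
      rwa [Real.exp_log hfr0, ← hEdef] at h
    have hds : phd a x ≤ s := by
      rw [div_lt_iff₀ (by linarith : (0:ℝ) < 1 - phd a x)] at hfr
      rw [hsdef, le_div_iff₀ (by linarith : (0:ℝ) < E + 1)]
      nlinarith
    calc ‖x - a‖ ≤ 4 * s / (1 - s ^ 2) * Real.sqrt (1 - ‖a‖ ^ 2) := hgeo s hs0 hs1 hds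
      _ ≤ K * Real.sqrt (1 - ‖a‖ ^ 2) :=
          mul_le_mul_of_nonneg_right (le_max_right _ _) (Real.sqrt_nonneg _)
  have hz_r := ratio p Cl B K hCl hK1 hoscB hlog a ha z hz1 (hball z hz1 hz2)
  have hw_r := ratio p Cl B K hCl hK1 hoscB hlog a ha w hw1 (hball w hw1 hw2)
  -- combine
  have hzw : |p z - p w| * |Real.log (1 - ‖a‖ ^ 2)| ≤ 2 * M := by
    have h1 : |p z - p w| ≤ |p z - p a| + |p w - p a| := by
      calc |p z - p w| ≤ |p z - p a| + |p a - p w| := abs_sub_le _ _ _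
        _ = |p z - p a| + |p w - p a| := by rw [abs_sub_comm (p a) (p w)]
    have h2 : (0:ℝ) ≤ |Real.log (1 - ‖a‖ ^ 2)| := abs_nonneg _
    nlinarith [hz_r, hw_r, mul_le_mul_of_nonneg_right h1 h2]
  have hbound : |(p z - p w) * Real.log (1 - ‖a‖ ^ 2)| ≤ 2 * M := by
    rw [abs_mul]; exact hzw
  obtain ⟨hb1, hb2⟩ := abs_le.mp hbound
  have e1 : Real.exp (-(2 * M)) ≤ (1 - ‖a‖ ^ 2) ^ (p z - p w) := by
    rw [Real.rpow_def_of_pos ht0]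
    exact Real.exp_le_exp.mpr (by rw [mul_comm]; linarith)
  have e2 : (1 - ‖a‖ ^ 2) ^ (p z - p w) ≤ Real.exp (2 * M) := by
    rw [Real.rpow_def_of_pos ht0]
    exact Real.exp_le_exp.mpr (by rw [mul_comm]; linarith)
  have hkey : (1 - ‖a‖ ^ 2) ^ (p z) = (1 - ‖a‖ ^ 2) ^ (p z - p w) * (1 - ‖a‖ ^ 2) ^ (p w) := by
    rw [← Real.rpow_add ht0]
    congr 1
    ring
  have hpw0 : (0:ℝ) < (1 - ‖a‖ ^ 2) ^ (p w) := Real.rpow_pos_of_pos ht0 _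
  constructor
  · calc Real.exp (-(2 * M)) * (1 - ‖a‖ ^ 2) ^ (p w)
        ≤ (1 - ‖a‖ ^ 2) ^ (p z - p w) * (1 - ‖a‖ ^ 2) ^ (p w) :=
          mul_le_mul_of_nonneg_right e1 hpw0.le
      _ = (1 - ‖a‖ ^ 2) ^ (p z) := hkey.symm
  · calc (1 - ‖a‖ ^ 2) ^ (p z)
        = (1 - ‖a‖ ^ 2) ^ (p z - p w) * (1 - ‖a‖ ^ 2) ^ (p w) := hkey
      _ ≤ Real.exp (2 * M) * (1 - ‖a‖ ^ 2) ^ (p w) :=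
          mul_le_mul_of_nonneg_right e2 hpw0.le


end
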